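/- For α ∈ (0,1)∪(1,∞), the pseudospherical score g_{α,PS}(x,r) = (α/(α−1)) (r(x)/‖r‖_α)^{α−1} is a proper scoring rule: for every probability distribution p on a finite set X and every probability distribution r on X with full support, E^p[g_{α,PS}(X,p)] ≥ E^p[g_{α,PS}(X,r)]. -/

import Mathlib

open BigOperators

/-- `p` is a probability distribution on the finite set `X`. -/
def IsDist {X : Type*} [Fintype X] (p : X → ℝ) : Prop :=
  (∀ x, 0 ≤ p x) ∧ ∑ x, p x = 1

/-- The pseudospherical score `g_{α,PS}(x,r) = (α/(α-1)) (r(x)/‖r‖_α)^{α-1}` is a proper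
scoring rule: for every distribution `p` and every full-support distribution `r`,
`E^p[g_{α,PS}(X,p)] ≥ E^p[g_{α,PS}(X,r)]`. -/
theorem pseudospherical_proper {X : Type*} [Fintype X]
    (α : ℝ) (hα0 : 0 < α) (hα1 : α ≠ 1)
    (p r : X → ℝ) (hp : IsDist p) (hr : IsDist r) (hrs : ∀ x, 0 < r x) :
    ∑ x, p x * (α / (α - 1) * (r x / (∑ x', r x' ^ α) ^ (1 / α)) ^ (α - 1))
      ≤ ∑ x, p x * (α / (α - 1) * (p x / (∑ x', p x' ^ α) ^ (1 / α)) ^ (α - 1)) := by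
  obtain ⟨hp0, hp1⟩ := hp
  obtain ⟨hr0, hr1⟩ := hr
  have hα1' : α - 1 ≠ 0 := sub_ne_zero.mpr hα1
  have hαne : α ≠ 0 := ne_of_gt hα0
  have hx0 : ∃ x, 0 < p x := by
    by_contra h
    push_neg at h
    have : ∑ x, p x = 0 := Finset.sum_eq_zero fun x _ => le_antisymm (h x) (hp0 x)
    rw [hp1] at this; norm_num at this
  obtain ⟨x0, hx0⟩ := hx0
  have hXne : (Finset.univ : Finset X).Nonempty := ⟨x0, Finset.mem_univ x0⟩
  set Sp := ∑ x', p x' ^ α with hSpdef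
  set Sr := ∑ x', r x' ^ α with hSrdef
  have hSr : 0 < Sr :=
    Finset.sum_pos (fun x _ => Real.rpow_pos_of_pos (hrs x) α) hXne
  have hSp : 0 < Sp := by
    have h1 : p x0 ^ α ≤ Sp :=
      Finset.single_le_sum (f := fun x => p x ^ α)
        (fun x _ => Real.rpow_nonneg (hp0 x) α) (Finset.mem_univ x0)
    exact lt_of_lt_of_le (Real.rpow_pos_of_pos hx0 α) h1
  set Np := Sp ^ (1 / α) with hNpdef
  set Nr := Sr ^ (1 / α) with hNrdef
  have hNp : 0 < Np := Real.rpow_pos_of_pos hSp _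
  have hNr : 0 < Nr := Real.rpow_pos_of_pos hSr _
  set T := ∑ x, p x * r x ^ (α - 1) with hTdef
  have hT : 0 < T := by
    have h1 : p x0 * r x0 ^ (α - 1) ≤ T :=
      Finset.single_le_sum (f := fun x => p x * r x ^ (α - 1))
        (fun x _ => mul_nonneg (hp0 x) (Real.rpow_nonneg (hrs x).le _)) (Finset.mem_univ x0)
    exact lt_of_lt_of_le (mul_pos hx0 (Real.rpow_pos_of_pos (hrs x0) _)) h1
  have hNrpow : Nr ^ (α - 1) = Sr ^ ((α - 1) / α) := by
    rw [hNrdef, ← Real.rpow_mul hSr.le]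
    congr 1; ring
  have hNppow : Np ^ (α - 1) = Sp ^ ((α - 1) / α) := by
    rw [hNpdef, ← Real.rpow_mul hSp.le]
    congr 1; ring
  have hNrpowpos : 0 < Nr ^ (α - 1) := Real.rpow_pos_of_pos hNr _
  have hpow : ∀ x, p x ^ α = p x * p x ^ (α - 1) := by
    intro x
    rcases (hp0 x).eq_or_lt with h | h
    · rw [← h, Real.zero_rpow hαne, zero_mul]
    · nth_rewrite 2 [← Real.rpow_one (p x)]
      rw [← Real.rpow_add h]
      congr 1; ring
  have hL : ∑ x, p x * (α / (α - 1) * (r x / Nr) ^ (α - 1))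
      = α / (α - 1) * (T / Nr ^ (α - 1)) := by
    rw [hTdef, Finset.sum_div, Finset.mul_sum]
    refine Finset.sum_congr rfl fun x _ => ?_
    rw [Real.div_rpow (hrs x).le hNr.le]
    ring
  have hR : ∑ x, p x * (α / (α - 1) * (p x / Np) ^ (α - 1))
      = α / (α - 1) * Np := by
    have hterm : ∀ x : X, p x * (α / (α - 1) * (p x / Np) ^ (α - 1))
        = α / (α - 1) * (p x ^ α / Np ^ (α - 1)) := by
      intro x
      rw [Real.div_rpow (hp0 x) hNp.le, hpow x]
      ring
    rw [Finset.sum_congr rfl fun x _ => hterm x, ← Finset.mul_sum, ← Finset.sum_div]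
    congr 1
    rw [hNppow, ← hSpdef]
    nth_rewrite 1 [← Real.rpow_one Sp]
    rw [← Real.rpow_sub hSp, hNpdef]
    congr 1
    field_simp
    ring
  rw [hL, hR]
  rcases lt_or_gt_of_ne hα1 with hlt | hgt
  · -- 0 < α < 1 : reverse Hölder
    have hc : α / (α - 1) < 0 := div_neg_of_pos_of_neg hα0 (by linarith)
    have hconj : (1 / α).HolderConjugate (1 / (1 - α)) := by
      rw [Real.holderConjugate_iff]; constructor
      · rw [lt_div_iff₀ hα0]; linarith
      · simp only [one_div, inv_inv]; ring
    have holder := Real.inner_le_Lp_mul_Lq_of_nonneg (s := Finset.univ)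
      (f := fun x => (p x * r x ^ (α - 1)) ^ α)
      (g := fun x => r x ^ ((1 - α) * α)) hconj
      (fun x _ => Real.rpow_nonneg
        (mul_nonneg (hp0 x) (Real.rpow_nonneg (hrs x).le _)) _)
      (fun x _ => Real.rpow_nonneg (hrs x).le _)
    have h1 : ∀ x : X, (p x * r x ^ (α - 1)) ^ α * r x ^ ((1 - α) * α) = p x ^ α := by
      intro x
      rw [Real.mul_rpow (hp0 x) (Real.rpow_nonneg (hrs x).le _),
        ← Real.rpow_mul (hrs x).le, mul_assoc, ← Real.rpow_add (hrs x),
        show (α - 1) * α + (1 - α) * α = 0 by ring, Real.rpow_zero, mul_one]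
    have h1α : (1 : ℝ) - α ≠ 0 := by
      intro h; apply hα1; linarith
    have h2 : ∀ x : X, ((p x * r x ^ (α - 1)) ^ α) ^ (1 / α) = p x * r x ^ (α - 1) := by
      intro x
      rw [← Real.rpow_mul (mul_nonneg (hp0 x) (Real.rpow_nonneg (hrs x).le _)),
        mul_one_div_cancel hαne, Real.rpow_one]
    have h3 : ∀ x : X, (r x ^ ((1 - α) * α)) ^ (1 / (1 - α)) = r x ^ α := by
      intro x
      rw [← Real.rpow_mul (hrs x).le, mul_one_div, mul_comm (1 - α) α, mul_div_assoc,
        div_self h1α, mul_one]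
    beta_reduce at holder
    rw [Finset.sum_congr rfl fun x _ => h1 x,
      Finset.sum_congr rfl fun x _ => h2 x,
      Finset.sum_congr rfl fun x _ => h3 x, one_div_one_div, one_div_one_div] at holder
    -- holder : Sp ≤ T ^ α * Sr ^ (1 - α)
    have key2 : Np ≤ T * Sr ^ ((1 - α) / α) := by
      have h4 : Np ≤ (T ^ α * Sr ^ (1 - α)) ^ (1 / α) :=
        Real.rpow_le_rpow hSp.le holder (by positivity)
      calc Np ≤ (T ^ α * Sr ^ (1 - α)) ^ (1 / α) := h4
        _ = T * Sr ^ ((1 - α) / α) := by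
          rw [Real.mul_rpow (Real.rpow_nonneg hT.le _) (Real.rpow_nonneg hSr.le _),
            ← Real.rpow_mul hT.le, ← Real.rpow_mul hSr.le,
            mul_one_div_cancel hαne, Real.rpow_one]
          congr 1; ring
    have key3 : Np ≤ T / Nr ^ (α - 1) := by
      have heq : T / Nr ^ (α - 1) = T * Sr ^ ((1 - α) / α) := by
        rw [hNrpow, div_eq_mul_inv, ← Real.rpow_neg hSr.le]
        congr 1; ring
      rw [heq]; exact key2
    exact mul_le_mul_of_nonpos_left key3 hc.le
  · -- α > 1 : Hölder
    have hc : 0 < α / (α - 1) := div_pos hα0 (by linarith)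
    have hconj : α.HolderConjugate (α / (α - 1)) := by
      rw [Real.holderConjugate_iff]; constructor
      · exact hgt
      · field_simp
        ring
    have holder := Real.inner_le_Lp_mul_Lq_of_nonneg (s := Finset.univ)
      (f := p) (g := fun x => r x ^ (α - 1)) hconj
      (fun x _ => hp0 x)
      (fun x _ => Real.rpow_nonneg (hrs x).le _)
    have h5 : ∀ x : X, (r x ^ (α - 1)) ^ (α / (α - 1)) = r x ^ α := by
      intro x
      rw [← Real.rpow_mul (hrs x).le]
      congr 1; field_simp
    beta_reduce at holder
    rw [Finset.sum_congr rfl fun x _ => h5 x, one_div_div] at holder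
    -- holder : T ≤ Sp ^ (1/α) * Sr ^ ((α-1)/α)
    have key : T ≤ Np * Nr ^ (α - 1) := by
      rw [hNrpow, hNpdef]
      exact holder
    have key3 : T / Nr ^ (α - 1) ≤ Np := by
      rw [div_le_iff₀ hNrpowpos]
      exact key
    exact mul_le_mul_of_nonneg_left key3 hc.le
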